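/- Let l, m, a, b, c ∈ ℝ² with l ≠ m. Write o = midpoint(l, m) and ρ = dist(l, m)/2. Suppose b lies on the circle of center o and radius ρ (i.e. dist(b, o) = ρ) with b ≠ l and b ≠ m; suppose a and c lie in the closed disk of center o and radius ρ, with a ≠ b and c ≠ b. Assume that a and m lie on weakly opposite sides of the line through b and l, i.e. ⟨a − b, J(l − b)⟩ · ⟨m − b, J(l − b)⟩ ≤ 0, and that c and l lie on weakly opposite sides of the line through b and m, i.e. ⟨c − b, J(m − b)⟩ · ⟨l − b, J(m − b)⟩ ≤ 0. Then the unsigned angle ∠abc at b satisfies π/2 ≤ ∠abc < π. (This is the angle bound for three consecutive points a ≺ b ≺ c of a link, where b is the apex of a P-free quadrant supported by the points l and m.) -/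

import Mathlib

open scoped RealInnerProductSpace

noncomputable section

/-- The Euclidean plane. -/
abbrev Plane := EuclideanSpace ℝ (Fin 2)

/-- Rotation of the plane by π/2: `J(x, y) = (−y, x)`. -/
def J (v : Plane) : Plane := WithLp.toLp 2 ![-(v 1), v 0]

/-- Lagrange identity in the plane: `{y, Jy}` is an orthogonal spanning pair. -/
lemma lagrange (x z y : Plane) :
    ⟪x, z⟫ * ⟪y, y⟫ = ⟪x, y⟫ * ⟪z, y⟫ + ⟪x, J y⟫ * ⟪z, J y⟫ := by
  simp only [J, PiLp.toLp_apply, WithLp.ofLp_toLp, PiLp.inner_apply, RCLike.inner_apply, conj_trivial, Fin.sum_univ_two,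
    Matrix.cons_val_zero, Matrix.cons_val_one, Matrix.head_cons]
  ring

/-- Power of a point with respect to the circle with diameter `l m`. -/
lemma power_point (l m x o : Plane) (ho : o = midpoint ℝ l m) :
    ⟪x - l, x - m⟫ = ‖x - o‖ ^ 2 - (dist l m / 2) ^ 2 := by
  have ho' : o = (2:ℝ)⁻¹ • (l + m) := by
    rw [ho, midpoint_eq_smul_add, invOf_eq_inv]
  have hd : l - o = (2:ℝ)⁻¹ • (l - m) := by rw [ho']; module
  have h1 : x - l = (x - o) - (l - o) := by abel
  have h2 : x - m = (x - o) + (l - o) := by rw [ho']; module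
  rw [h1, h2, inner_sub_left, inner_add_right, inner_add_right,
    real_inner_comm (l - o) (x - o), real_inner_self_eq_norm_sq,
    real_inner_self_eq_norm_sq, hd, norm_smul, dist_eq_norm]
  simp [mul_pow]
  ring

set_option maxHeartbeats 1000000 in
/-- Angle bound for three consecutive points `a ≺ b ≺ c` of a link, where `b` is the
apex of a `P`-free quadrant supported by the points `l` and `m`: the angle at `b`
satisfies `π/2 ≤ ∠abc < π`. -/
theorem link_angle_bound (l m a b c : Plane) (hlm : l ≠ m)
    (o : Plane) (ho : o = midpoint ℝ l m) (ρ : ℝ) (hρ : ρ = dist l m / 2)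
    (hb : dist b o = ρ) (hbl : b ≠ l) (hbm : b ≠ m)
    (ha : dist a o ≤ ρ) (hc : dist c o ≤ ρ) (hab : a ≠ b) (hcb : c ≠ b)
    (hopp₁ : ⟪a - b, J (l - b)⟫ * ⟪m - b, J (l - b)⟫ ≤ 0)
    (hopp₂ : ⟪c - b, J (m - b)⟫ * ⟪l - b, J (m - b)⟫ ≤ 0) :
    Real.pi / 2 ≤ EuclideanGeometry.angle a b c ∧
      EuclideanGeometry.angle a b c < Real.pi := by
  have hρ0 : 0 ≤ ρ := hρ ▸ by positivity
  set p := l - b with hp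
  set q := m - b with hq
  set u := a - b with hu
  set v := c - b with hv
  have hpne : p ≠ 0 := sub_ne_zero.2 (Ne.symm hbl)
  have hqne : q ≠ 0 := sub_ne_zero.2 (Ne.symm hbm)
  have hune : u ≠ 0 := sub_ne_zero.2 hab
  have hvne : v ≠ 0 := sub_ne_zero.2 hcb
  have hP : (0:ℝ) < ⟪p, p⟫ := by
    rw [real_inner_self_eq_norm_sq]; exact pow_pos (norm_pos_iff.2 hpne) 2
  have hQ : (0:ℝ) < ⟪q, q⟫ := by
    rw [real_inner_self_eq_norm_sq]; exact pow_pos (norm_pos_iff.2 hqne) 2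
  have hU : (0:ℝ) < ⟪u, u⟫ := by
    rw [real_inner_self_eq_norm_sq]; exact pow_pos (norm_pos_iff.2 hune) 2
  have hV : (0:ℝ) < ⟪v, v⟫ := by
    rw [real_inner_self_eq_norm_sq]; exact pow_pos (norm_pos_iff.2 hvne) 2
  -- Thales: ⟪p, q⟫ = 0
  have hpq : ⟪p, q⟫ = 0 := by
    have h := power_point l m b o ho
    rw [← dist_eq_norm, hb, hρ] at h
    have e : b - l = -p := by rw [hp]; abel
    have e' : b - m = -q := by rw [hq]; abel
    rw [e, e', inner_neg_neg] at h
    linarith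
  -- disk conditions
  have hdisk : ∀ x : Plane, dist x o ≤ ρ → ⟪x - b, p⟫ + ⟪x - b, q⟫ ≥ ⟪x - b, x - b⟫ := by
    intro x hx
    have h1 : ⟪x - l, x - m⟫ ≤ 0 := by
      rw [power_point l m x o ho, ← hρ]
      have hxo : ‖x - o‖ ≤ ρ := by rw [← dist_eq_norm]; exact hx
      have := pow_le_pow_left₀ (norm_nonneg (x - o)) hxo 2
      linarith
    have e1 : x - l = (x - b) - p := by rw [hp]; abel
    have e2 : x - m = (x - b) - q := by rw [hq]; abel
    have expand : ⟪x - l, x - m⟫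
        = ⟪x - b, x - b⟫ - ⟪x - b, p⟫ - ⟪x - b, q⟫ + ⟪p, q⟫ := by
      rw [e1, e2]
      simp only [inner_sub_left, inner_sub_right]
      linarith [real_inner_comm x p, real_inner_comm b p, real_inner_comm p q]
    rw [expand, hpq] at h1
    linarith
  have hda : ⟪u, p⟫ + ⟪u, q⟫ ≥ ⟪u, u⟫ := hdisk a ha
  have hdc : ⟪v, p⟫ + ⟪v, q⟫ ≥ ⟪v, v⟫ := hdisk c hc
  -- side conditions give sign information
  have hqp : ⟪q, p⟫ = 0 := by rw [real_inner_comm]; exact hpq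
  have huq : ⟪u, q⟫ * ⟪p, p⟫ = ⟪u, J p⟫ * ⟪q, J p⟫ := by
    have hl := lagrange u q p
    rw [hqp, mul_zero] at hl; linarith
  have hvq : ⟪v, q⟫ * ⟪p, p⟫ = ⟪v, J p⟫ * ⟪q, J p⟫ := by
    have hl := lagrange v q p
    rw [hqp, mul_zero] at hl; linarith
  have hqJp : ⟪q, J p⟫ * ⟪q, J p⟫ = ⟪p, p⟫ * ⟪q, q⟫ := by
    have hl := lagrange q q p
    rw [hqp, mul_zero] at hl; linarith
  have hB1 : ⟪u, q⟫ ≤ 0 := by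
    have h' : ⟪u, q⟫ * ⟪p, p⟫ ≤ 0 * ⟪p, p⟫ := by
      rw [zero_mul, huq]; exact hopp₁
    exact le_of_mul_le_mul_right h' hP
  have hA2 : ⟪v, p⟫ ≤ 0 := by
    have hl := lagrange v p q
    rw [hpq, mul_zero] at hl
    have h' : ⟪v, p⟫ * ⟪q, q⟫ ≤ 0 * ⟪q, q⟫ := by
      rw [zero_mul, hl]; linarith [hopp₂]
    exact le_of_mul_le_mul_right h' hQ
  have hA1 : 0 < ⟪u, p⟫ := by linarith
  have hB2 : 0 < ⟪v, q⟫ := by linarith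
  -- main inequality: ⟪u, v⟫ ≤ 0
  have hJuv : ⟪u, J p⟫ * ⟪v, J p⟫ ≤ 0 := by
    have key : ⟪u, J p⟫ * ⟪v, J p⟫ * (⟪p, p⟫ * ⟪q, q⟫)
        = (⟪u, q⟫ * ⟪v, q⟫) * (⟪p, p⟫ * ⟪p, p⟫) := by
      rw [← hqJp]
      linear_combination (-(⟪v, q⟫ * ⟪p, p⟫)) * huq + (-(⟪u, J p⟫ * ⟪q, J p⟫)) * hvq
    have h' : ⟪u, J p⟫ * ⟪v, J p⟫ * (⟪p, p⟫ * ⟪q, q⟫) ≤ 0 * (⟪p, p⟫ * ⟪q, q⟫) := by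
      rw [zero_mul, key]
      exact mul_nonpos_of_nonpos_of_nonneg
        (mul_nonpos_of_nonpos_of_nonneg hB1 hB2.le) (mul_nonneg hP.le hP.le)
    exact le_of_mul_le_mul_right h' (mul_pos hP hQ)
  have huv : ⟪u, v⟫ ≤ 0 := by
    have hl := lagrange u v p
    have h' : ⟪u, v⟫ * ⟪p, p⟫ ≤ 0 * ⟪p, p⟫ := by
      rw [zero_mul, hl]
      have := mul_nonpos_of_nonneg_of_nonpos hA1.le hA2
      linarith
    exact le_of_mul_le_mul_right h' hP
  -- conclude
  have hangle : EuclideanGeometry.angle a b c = InnerProductGeometry.angle u v := by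
    rw [EuclideanGeometry.angle, vsub_eq_sub, vsub_eq_sub]
  constructor
  · rw [hangle, InnerProductGeometry.angle, Real.arccos]
    have h2 : ⟪u, v⟫ / (‖u‖ * ‖v‖) ≤ 0 := by
      apply div_nonpos_of_nonpos_of_nonneg huv; positivity
    have := Real.arcsin_nonpos.2 h2
    linarith
  · rw [hangle]
    rcases lt_or_eq_of_le (InnerProductGeometry.angle_le_pi u v) with h | h
    · exact h
    · exfalso
      obtain ⟨-, r, hr, hvr⟩ := InnerProductGeometry.angle_eq_pi_iff.1 h
      have hsum : ⟪v, p⟫ + ⟪v, q⟫ = r * (⟪u, p⟫ + ⟪u, q⟫) := by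
        rw [hvr, real_inner_smul_left, real_inner_smul_left]; ring
      have h1 : 0 < ⟪u, p⟫ + ⟪u, q⟫ := by linarith
      have h2 : r * (⟪u, p⟫ + ⟪u, q⟫) < 0 := mul_neg_of_neg_of_pos hr h1
      linarith
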